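/- Let G be a torsion-free abelian group and let R be a G-graded commutative ring. If I is a graded proper ideal of R with the property that whenever rr' ∈ I for homogeneous elements r, r' ∈ R one has r ∈ I or r' ∈ I, then I is a prime ideal of R. -/

import Mathlib

open Finset in
lemma exists_extreme_pair {G : Type*} [AddCommGroup G]
    (hG : ∀ (n : ℕ) (x : G), n ≠ 0 → n • x = 0 → x = 0)
    (A B : Finset G) (hA : A.Nonempty) (hB : B.Nonempty) :
    ∃ a ∈ A, ∃ b ∈ B, ∀ a' ∈ A, ∀ b' ∈ B, a' + b' = a + b → a' = a ∧ b' = b := by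
  classical
  set H := AddSubgroup.closure ((A ∪ B : Finset G) : Set G) with hH
  have hmem : ∀ x ∈ A ∪ B, x ∈ H := fun x hx => AddSubgroup.subset_closure hx
  haveI : AddGroup.FG H := AddGroup.closure_finset_fg (A ∪ B)
  haveI : Module.Finite ℤ H := Module.Finite.iff_addGroup_fg.mpr inferInstance
  haveI : NoZeroSMulDivisors ℤ H := by
    constructor
    intro c x hcx
    by_contra h
    push_neg at h
    obtain ⟨hc, hx⟩ := h
    apply hx
    have hc' : c • (x : G) = 0 := by
      have : ((c • x : H) : G) = 0 := by rw [hcx]; rfl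
      simpa using this
    have h1 : (c.natAbs : ℤ) • (x : G) = 0 := by
      rcases Int.natAbs_eq c with h | h
      · rw [← h, hc']
      · rw [show (c.natAbs : ℤ) = -c by omega, neg_smul, hc', neg_zero]
    rw [natCast_zsmul] at h1
    have := hG c.natAbs (x : G) (Int.natAbs_ne_zero.mpr hc) h1
    exact Subtype.ext this
  haveI : Module.Free ℤ H := Module.free_of_finite_type_torsion_free'
  let bas := (Module.Free.chooseBasis ℤ H).reindex
    (Fintype.equivFin (Module.Free.ChooseBasisIndex ℤ H))
  let f : H → Lex (Fin _ →₀ ℤ) := fun z => toLex (bas.repr z)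
  have f_add : ∀ z w : H, f (z + w) = f z + f w := by
    intro z w
    simp only [f, map_add]
    rfl
  have f_inj : Function.Injective f := fun z w h => by
    apply bas.repr.injective
    exact toLex.injective h
  let F : G → Lex (Fin _ →₀ ℤ) := fun g => if h : g ∈ H then f ⟨g, h⟩ else 0
  obtain ⟨a, haA, ha⟩ := A.exists_max_image F hA
  obtain ⟨b, hbB, hb⟩ := B.exists_max_image F hB
  refine ⟨a, haA, b, hbB, ?_⟩
  intro a' ha' b' hb' heq
  have maA : a ∈ H := hmem a (mem_union_left _ haA)
  have mbB : b ∈ H := hmem b (mem_union_right _ hbB)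
  have maA' : a' ∈ H := hmem a' (mem_union_left _ ha')
  have mbB' : b' ∈ H := hmem b' (mem_union_right _ hb')
  have hFa : F a = f ⟨a, maA⟩ := dif_pos maA
  have hFb : F b = f ⟨b, mbB⟩ := dif_pos mbB
  have hFa' : F a' = f ⟨a', maA'⟩ := dif_pos maA'
  have hFb' : F b' = f ⟨b', mbB'⟩ := dif_pos mbB'
  have hsum : f ⟨a', maA'⟩ + f ⟨b', mbB'⟩ = f ⟨a, maA⟩ + f ⟨b, mbB⟩ := by
    rw [← f_add, ← f_add]
    congr 1
    exact Subtype.ext heq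
  have h1 : f ⟨a', maA'⟩ ≤ f ⟨a, maA⟩ := by rw [← hFa, ← hFa']; exact ha a' ha'
  have h2 : f ⟨b', mbB'⟩ ≤ f ⟨b, mbB⟩ := by rw [← hFb, ← hFb']; exact hb b' hb'
  have e1 : f ⟨a, maA⟩ = f ⟨a', maA'⟩ :=
    le_antisymm (le_of_add_le_add_right (by rw [← hsum]; exact add_le_add_right h2 _)) h1
  have haa : a' = a := congrArg Subtype.val (f_inj e1.symm)
  exact ⟨haa, by rw [haa] at heq; exact add_left_cancel heq⟩

open GradedRing DirectSum SetLike Finset in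
/-- If `I` is a graded proper ideal of a `G`-graded commutative ring, with `G` a torsion-free
abelian group, such that whenever a product of homogeneous elements lies in `I` one of the
factors lies in `I`, then `I` is a prime ideal. -/
theorem graded_ideal_homogeneous_prime_condition_isPrime
    {G : Type*} [AddCommGroup G] [DecidableEq G]
    (hG : ∀ (n : ℕ) (x : G), n ≠ 0 → n • x = 0 → x = 0)
    {R : Type*} [CommRing R] (𝒜 : G → AddSubgroup R) [GradedRing 𝒜]
    (I : Ideal R) (hI : Ideal.IsHomogeneous 𝒜 I) (hIproper : I ≠ ⊤)
    (hmul : ∀ r r' : R, SetLike.IsHomogeneousElem 𝒜 r → SetLike.IsHomogeneousElem 𝒜 r' →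
      r * r' ∈ I → r ∈ I ∨ r' ∈ I) :
    I.IsPrime := by
  refine ⟨hIproper, ?_⟩
  intro x y hxy
  by_contra! rid
  obtain ⟨rid₁, rid₂⟩ := rid
  classical
  set set₁ := (decompose 𝒜 x).support.filter (fun i => proj 𝒜 i x ∉ I) with set₁_eq
  set set₂ := (decompose 𝒜 y).support.filter (fun i => proj 𝒜 i y ∉ I) with set₂_eq
  have nonempty :
      ∀ x : R, x ∉ I → ((decompose 𝒜 x).support.filter (fun i => proj 𝒜 i x ∉ I)).Nonempty := by
    intro x hx
    rw [filter_nonempty_iff]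
    contrapose! hx
    simp_rw [proj_apply] at hx
    rw [← sum_support_decompose 𝒜 x]
    exact Ideal.sum_mem _ hx
  obtain ⟨max₁, mem_max₁, max₂, mem_max₂, hmax⟩ :=
    exists_extreme_pair hG set₁ set₂ (nonempty x rid₁) (nonempty y rid₂)
  replace hxy : proj 𝒜 (max₁ + max₂) (x * y) ∈ I := hI _ hxy
  have mem_I : proj 𝒜 max₁ x * proj 𝒜 max₂ y ∈ I := by
    set antidiag :=
      ((decompose 𝒜 x).support ×ˢ (decompose 𝒜 y).support).filter
        (fun z => z.1 + z.2 = max₁ + max₂) with ha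
    have mem_antidiag : (max₁, max₂) ∈ antidiag := by
      simp only [antidiag, add_sum_erase, mem_filter, mem_product]
      exact ⟨⟨mem_of_mem_filter _ mem_max₁, mem_of_mem_filter _ mem_max₂⟩, trivial⟩
    have eq_add_sum :=
      calc
        proj 𝒜 (max₁ + max₂) (x * y) = ∑ ij ∈ antidiag, proj 𝒜 ij.1 x * proj 𝒜 ij.2 y := by
          simp_rw [ha, proj_apply, DirectSum.decompose_mul, DirectSum.coe_mul_apply 𝒜]
        _ =
            proj 𝒜 max₁ x * proj 𝒜 max₂ y +
              ∑ ij ∈ antidiag.erase (max₁, max₂), proj 𝒜 ij.1 x * proj 𝒜 ij.2 y :=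
          (add_sum_erase _ _ mem_antidiag).symm
    rw [eq_sub_of_add_eq eq_add_sum.symm]
    refine Ideal.sub_mem _ hxy (Ideal.sum_mem _ fun z H => ?_)
    rcases z with ⟨i, j⟩
    simp only [antidiag, mem_erase, Prod.mk.injEq, Ne, mem_filter, mem_product] at H
    rcases H with ⟨H₁, ⟨H₂, H₃⟩, H₄⟩
    have not_both : i ∉ set₁ ∨ j ∉ set₂ := by
      by_contra h
      push_neg at h
      obtain ⟨hi, hj⟩ := hmax i h.1 j h.2 H₄
      exact H₁ ⟨hi, hj⟩
    cases' not_both with not_mem not_mem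
    · rw [set₁_eq] at not_mem
      simp only [not_and, Classical.not_not, Ne, mem_filter] at not_mem
      exact Ideal.mul_mem_right _ I (not_mem H₂)
    · rw [set₂_eq] at not_mem
      simp only [not_and, Classical.not_not, Ne, mem_filter] at not_mem
      exact Ideal.mul_mem_left I _ (not_mem H₃)
  have not_mem_I : proj 𝒜 max₁ x * proj 𝒜 max₂ y ∉ I := by
    have neither_mem : proj 𝒜 max₁ x ∉ I ∧ proj 𝒜 max₂ y ∉ I := by
      rw [mem_filter] at mem_max₁ mem_max₂
      exact ⟨mem_max₁.2, mem_max₂.2⟩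
    intro _rid
    cases' hmul _ _ ⟨max₁, SetLike.coe_mem _⟩ ⟨max₂, SetLike.coe_mem _⟩ mem_I with h h
    · apply neither_mem.1 h
    · apply neither_mem.2 h
  exact not_mem_I mem_I
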